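/- Every finite simple unmixed bipartite graph with no isolated vertices has a perfect matching. -/

import Mathlib

open SimpleGraph MvPolynomial

variable {V : Type*}

/-- `s` is an independent set of the graph `G`. -/
def IsIndep (G : SimpleGraph V) (s : Set V) : Prop :=
  s.Pairwise fun a b => ¬ G.Adj a b

/-- `s` is a maximal independent set of the graph `G`. -/
def IsMaxIndep (G : SimpleGraph V) (s : Set V) : Prop :=
  IsIndep G s ∧ ∀ t : Set V, IsIndep G t → s ⊆ t → s = t

/-- `G` is unmixed: all maximal independent sets have the same cardinality. -/
def Unmixed (G : SimpleGraph V) : Prop :=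
  ∀ s t : Set V, IsMaxIndep G s → IsMaxIndep G t → s.ncard = t.ncard

/-- `V1, V2` form a bipartition of the graph `G`. -/
def IsBipartition (G : SimpleGraph V) (V1 V2 : Set V) : Prop :=
  Disjoint V1 V2 ∧ V1 ∪ V2 = Set.univ ∧
    ∀ ⦃a b⦄, G.Adj a b → (a ∈ V1 ∧ b ∈ V2) ∨ (a ∈ V2 ∧ b ∈ V1)

/-- `G` has no isolated vertices. -/
def NoIsolated (G : SimpleGraph V) : Prop := ∀ v, ∃ w, G.Adj v w

/-- The edges `{x i, y i}` form a perfect matching of `G`. -/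
def PMatch (G : SimpleGraph V) (n : ℕ) (x y : Fin n → V) : Prop :=
  Function.Injective x ∧ Function.Injective y ∧ (∀ i j, x i ≠ y j) ∧
    (∀ v, (∃ i, v = x i) ∨ (∃ i, v = y i)) ∧ ∀ i, G.Adj (x i) (y i)

/-- Condition 1: for each `i` the induced subgraph on `N(x i) ∪ N(y i)` is complete
bipartite, i.e. every vertex of `N(y i)` is adjacent to every vertex of `N(x i)`. -/
def Cond1 (G : SimpleGraph V) (n : ℕ) (x y : Fin n → V) : Prop :=
  ∀ i, ∀ a ∈ G.neighborSet (y i), ∀ b ∈ G.neighborSet (x i), G.Adj a b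

/-- Condition 2: for `i ≠ j`, not both `x i ~ y j` and `x j ~ y i`. -/
def Cond2 (G : SimpleGraph V) (n : ℕ) (x y : Fin n → V) : Prop :=
  ∀ i j, i ≠ j → G.Adj (x i) (y j) → ¬ G.Adj (x j) (y i)

section Aux

/-- A side of a bipartition with no isolated vertices is a maximal independent set. -/
lemma side_maxIndep (G : SimpleGraph V) (V1 V2 : Set V) (hd : Disjoint V1 V2)
    (huniv : V1 ∪ V2 = Set.univ)
    (hadj : ∀ ⦃a b⦄, G.Adj a b → (a ∈ V1 ∧ b ∈ V2) ∨ (a ∈ V2 ∧ b ∈ V1))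
    (hni : NoIsolated G) : IsMaxIndep G V1 := by
  constructor
  · intro a ha b hb _ hab
    rcases hadj hab with ⟨_, h2⟩ | ⟨h2, _⟩
    · exact hd.ne_of_mem hb h2 rfl
    · exact hd.ne_of_mem ha h2 rfl
  · intro t ht hsub
    apply Set.Subset.antisymm hsub
    intro v hv
    by_contra hv1
    have hv2 : v ∈ V2 := by
      have h := Set.mem_univ v
      rw [← huniv, Set.mem_union] at h
      exact h.resolve_left hv1
    obtain ⟨w, hw⟩ := hni v
    have hwV1 : w ∈ V1 := by
      rcases hadj hw with ⟨h1, _⟩ | ⟨_, h2⟩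
      · exact absurd h1 hv1
      · exact h2
    exact ht hv (hsub hwV1) hw.ne hw

/-- Every independent set of a finite graph extends to a maximal independent set. -/
lemma exists_maxIndep_ext [Finite V] (G : SimpleGraph V) (s : Set V) (hs : IsIndep G s) :
    ∃ t : Set V, s ⊆ t ∧ IsMaxIndep G t := by
  have hfin : {u : Set V | IsIndep G u ∧ s ⊆ u}.Finite := Set.toFinite _
  obtain ⟨t, ⟨htind, hst⟩, hmax⟩ :=
    Set.Finite.exists_maximalFor id _ hfin ⟨s, hs, subset_rfl⟩
  refine ⟨t, hst, htind, fun t' ht' htt' => ?_⟩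
  exact htt'.antisymm (hmax ⟨ht', hst.trans htt'⟩ htt')

end Aux

/-- Every unmixed bipartite graph with no isolated vertices has a perfect matching. -/
theorem stmt3 [Fintype V] (G : SimpleGraph V) (V1 V2 : Set V)
    (hb : IsBipartition G V1 V2) (hni : NoIsolated G) (hu : Unmixed G) :
    ∃ M : G.Subgraph, M.IsPerfectMatching := by
  classical
  obtain ⟨hd, huniv, hadj⟩ := hb
  have hmax1 : IsMaxIndep G V1 := side_maxIndep G V1 V2 hd huniv hadj hni
  have hmax2 : IsMaxIndep G V2 := side_maxIndep G V2 V1 hd.symm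
    (by rw [Set.union_comm]; exact huniv) (fun a b h => (hadj h).symm) hni
  -- Hall's condition
  have hall : ∀ S : Finset ↥V1, S.card ≤ (S.biUnion fun a => G.neighborFinset ↑a).card := by
    intro S
    set N : Set V := ↑(S.biUnion fun a => G.neighborFinset ↑a) with hN
    set S' : Set V := (fun a : ↥V1 => (a : V)) '' ↑S with hS'
    have hS'V1 : S' ⊆ V1 := by rintro v ⟨a, _, rfl⟩; exact a.2
    have hNmem : ∀ v, v ∈ N ↔ ∃ a ∈ S', G.Adj a v := by
      intro v
      simp only [hN, Finset.coe_biUnion, Set.mem_iUnion, Finset.mem_coe,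
        mem_neighborFinset, hS']
      constructor
      · rintro ⟨a, ha, hav⟩; exact ⟨a, ⟨a, ha, rfl⟩, hav⟩
      · rintro ⟨_, ⟨a, ha, rfl⟩, hav⟩; exact ⟨a, ha, hav⟩
    have hNV2 : N ⊆ V2 := by
      intro v hv
      obtain ⟨a, haS, hav⟩ := (hNmem v).1 hv
      rcases hadj hav with ⟨_, h⟩ | ⟨h, _⟩
      · exact h
      · exact absurd (hS'V1 haS) (hd.symm.ne_of_mem h · rfl)
    -- S' ∪ (V2 \ N) is independent
    have hind : IsIndep G (S' ∪ (V2 \ N)) := by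
      rintro a (ha | ⟨ha2, haN⟩) b (hb | ⟨hb2, hbN⟩) hne hab
      · exact (hmax1.1 (hS'V1 ha) (hS'V1 hb) hne) hab
      · exact hbN ((hNmem b).2 ⟨a, ha, hab⟩)
      · exact haN ((hNmem a).2 ⟨b, hb, hab.symm⟩)
      · exact (hmax2.1 ha2 hb2 hne) hab
    obtain ⟨T, hsubT, hTmax⟩ := exists_maxIndep_ext G _ hind
    have hTcard : T.ncard = V2.ncard := hu T V2 hTmax hmax2
    -- split T
    have hsplit : T = (T ∩ V1) ∪ (T ∩ V2) := by
      rw [← Set.inter_union_distrib_left, huniv, Set.inter_univ]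
    have hdsj : Disjoint (T ∩ V1) (T ∩ V2) :=
      Set.disjoint_of_subset Set.inter_subset_right Set.inter_subset_right hd
    have hcardsplit : (T ∩ V1).ncard + (T ∩ V2).ncard = V2.ncard := by
      rw [← Set.ncard_union_eq hdsj (Set.toFinite _) (Set.toFinite _), ← hsplit, hTcard]
    -- T ∩ V2 contains V2 \ N
    have h1 : V2 \ N ⊆ T ∩ V2 := by
      intro v hv
      exact ⟨hsubT (Or.inr hv), hv.1⟩
    have h2 : S' ⊆ T ∩ V1 := by
      intro v hv
      exact ⟨hsubT (Or.inl hv), hS'V1 hv⟩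
    have hc1 : V2.ncard - N.ncard ≤ (T ∩ V2).ncard := by
      calc V2.ncard - N.ncard = (V2 \ N).ncard := (Set.ncard_diff hNV2 (Set.toFinite _)).symm
        _ ≤ _ := Set.ncard_le_ncard h1 (Set.toFinite _)
    have hc2 : S'.ncard ≤ (T ∩ V1).ncard := Set.ncard_le_ncard h2 (Set.toFinite _)
    have hc3 : N.ncard ≤ V2.ncard := Set.ncard_le_ncard hNV2 (Set.toFinite _)
    have hScard : S'.ncard = S.card := by
      rw [hS', Set.ncard_image_of_injective _ Subtype.coe_injective]
      simp [Set.ncard_coe_finset]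
    have hNcard : N.ncard = (S.biUnion fun a => G.neighborFinset ↑a).card := by
      rw [hN, Set.ncard_coe_finset]
    omega
  -- Apply Hall
  obtain ⟨f, hfinj, hf⟩ := (Finset.all_card_le_biUnion_card_iff_exists_injective
    (fun a : ↥V1 => G.neighborFinset ↑a)).1 hall
  have hfadj : ∀ a : ↥V1, G.Adj ↑a (f a) := by
    intro a; have := hf a; rwa [mem_neighborFinset] at this
  have hfV2 : ∀ a : ↥V1, f a ∈ V2 := by
    intro a
    rcases hadj (hfadj a) with ⟨_, h⟩ | ⟨h, _⟩
    · exact h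
    · exact absurd rfl (hd.ne_of_mem a.2 h)
  -- |V1| = |V2|, so f is bijective onto V2
  have hcards : V1.ncard = V2.ncard := hu V1 V2 hmax1 hmax2
  let g : ↥V1 → ↥V2 := fun a => ⟨f a, hfV2 a⟩
  have hginj : Function.Injective g := fun a b h => hfinj (congrArg Subtype.val h)
  have hgbij : Function.Bijective g := by
    rw [Fintype.bijective_iff_injective_and_card]
    refine ⟨hginj, ?_⟩
    rw [← Nat.card_coe_set_eq, ← Nat.card_coe_set_eq] at hcards
    simpa [Nat.card_eq_fintype_card] using hcards
  -- Build the matching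
  refine ⟨⟨Set.univ, fun u v => (∃ a : ↥V1, u = ↑a ∧ v = f a) ∨ (∃ a : ↥V1, v = ↑a ∧ u = f a),
    ?_, fun _ => trivial, ?_⟩, ?_⟩
  · rintro u v (⟨a, rfl, rfl⟩ | ⟨a, rfl, rfl⟩)
    · exact hfadj a
    · exact (hfadj a).symm
  · refine ⟨?_⟩
    rintro u v (⟨a, h1, h2⟩ | ⟨a, h1, h2⟩)
    · exact Or.inr ⟨a, h1, h2⟩
    · exact Or.inl ⟨a, h1, h2⟩
  · rw [SimpleGraph.Subgraph.isPerfectMatching_iff]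
    intro v
    by_cases hv1 : v ∈ V1
    · refine ⟨f ⟨v, hv1⟩, Or.inl ⟨⟨v, hv1⟩, rfl, rfl⟩, ?_⟩
      rintro w (⟨a, ha, rfl⟩ | ⟨a, _, hvfa⟩)
      · have : a = ⟨v, hv1⟩ := Subtype.ext ha.symm
        rw [this]
      · exact absurd hv1 (hd.ne_of_mem · (hvfa ▸ hfV2 a) rfl)
    · have hv2 : v ∈ V2 := by
        have h := Set.mem_univ v
        rw [← huniv, Set.mem_union] at h
        exact h.resolve_left hv1
      obtain ⟨a, ha⟩ := hgbij.2 ⟨v, hv2⟩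
      have hfa : f a = v := congrArg Subtype.val ha
      refine ⟨↑a, Or.inr ⟨a, rfl, hfa.symm⟩, ?_⟩
      rintro w (⟨b, hvb, _⟩ | ⟨b, rfl, hvfb⟩)
      · exact absurd (hvb ▸ b.2) hv1
      · rw [hfinj (hfa.trans hvfb)]
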